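/- Let L be a lattice with a metric d satisfying d(x∧y, x∧z) ≤ d(y,z) for all x,y,z, in which every increasing Cauchy sequence converges and every decreasing Cauchy sequence converges. Then L is complete as a metric space. -/

import Mathlib

open Filter

private def meetSeq {L : Type*} [Lattice L] (w : ℕ → L) : ℕ → ℕ → L
  | n, 0 => w n
  | n, m + 1 => w n ⊓ meetSeq w (n + 1) m

private lemma meetSeq_anti {L : Type*} [Lattice L] (w : ℕ → L) :
    ∀ m n, meetSeq w n (m + 1) ≤ meetSeq w n m := by
  intro m
  induction m with
  | zero => intro n; exact inf_le_left
  | succ m ih => intro n; exact inf_le_inf_left _ (ih (n + 1))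

private lemma meetSeq_dist {L : Type*} [Lattice L] [MetricSpace L]
    (hLip : ∀ x y z : L, dist (x ⊓ y) (x ⊓ z) ≤ dist y z) (w : ℕ → L) :
    ∀ m n, dist (meetSeq w n m) (meetSeq w n (m + 1)) ≤ dist (w (n + m)) (w (n + m + 1)) := by
  intro m
  induction m with
  | zero =>
    intro n
    have : meetSeq w n 0 = w n ⊓ w n := by simp [meetSeq]
    calc dist (meetSeq w n 0) (meetSeq w n 1) = dist (w n ⊓ w n) (w n ⊓ w (n + 1)) := by
          rw [this]; rfl
      _ ≤ dist (w n) (w (n + 1)) := hLip _ _ _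
      _ = dist (w (n + 0)) (w (n + 0 + 1)) := by norm_num
  | succ m ih =>
    intro n
    calc dist (meetSeq w n (m + 1)) (meetSeq w n (m + 2))
        = dist (w n ⊓ meetSeq w (n + 1) m) (w n ⊓ meetSeq w (n + 1) (m + 1)) := rfl
      _ ≤ dist (meetSeq w (n + 1) m) (meetSeq w (n + 1) (m + 1)) := hLip _ _ _
      _ ≤ dist (w (n + 1 + m)) (w (n + 1 + m + 1)) := ih (n + 1)
      _ = dist (w (n + (m + 1))) (w (n + (m + 1) + 1)) := by ring_nf

private lemma inf_lip2 {L : Type*} [Lattice L] [MetricSpace L]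
    (hLip : ∀ x y z : L, dist (x ⊓ y) (x ⊓ z) ≤ dist y z) (x x' y y' : L) :
    dist (x ⊓ y) (x' ⊓ y') ≤ dist x x' + dist y y' := by
  calc dist (x ⊓ y) (x' ⊓ y') ≤ dist (x ⊓ y) (x ⊓ y') + dist (x ⊓ y') (x' ⊓ y') :=
        dist_triangle _ _ _
    _ ≤ dist x x' + dist y y' := by
        have h1 : dist (x ⊓ y) (x ⊓ y') ≤ dist y y' := hLip _ _ _
        have h2 : dist (x ⊓ y') (x' ⊓ y') ≤ dist x x' := by
          rw [inf_comm x y', inf_comm x' y']; exact hLip _ _ _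
        linarith

/-- A lattice with a metric satisfying `d(x∧y, x∧z) ≤ d(y,z)`, in which every increasing
Cauchy sequence converges and every decreasing Cauchy sequence converges, is complete as a
metric space. -/
theorem stmt15 {L : Type*} [Lattice L] [MetricSpace L]
    (hLip : ∀ x y z : L, dist (x ⊓ y) (x ⊓ z) ≤ dist y z)
    (hinc : ∀ u : ℕ → L, Monotone u → CauchySeq u → ∃ a, Tendsto u atTop (nhds a))
    (hdec : ∀ u : ℕ → L, Antitone u → CauchySeq u → ∃ a, Tendsto u atTop (nhds a)) :
    ∀ u : ℕ → L, CauchySeq u → ∃ a, Tendsto u atTop (nhds a) := by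
  intro u hu
  -- extract a rapidly Cauchy subsequence
  obtain ⟨φ, hφmono, hφd⟩ := hu.subseq_mem (V := fun n => {p : L × L | dist p.1 p.2 < (1/2)^n})
    (fun n => Metric.dist_mem_uniformity (by positivity))
  set w : ℕ → L := u ∘ φ with hw
  have hwd : ∀ k, dist (w k) (w (k + 1)) ≤ (1/2 : ℝ)^k := by
    intro k
    have h := hφd k
    simp only [Set.mem_setOf_eq] at h
    rw [dist_comm] at h
    exact h.le
  have hr : (1/2 : ℝ) < 1 := by norm_num
  -- the decreasing sequences of partial meets
  have hgeo : ∀ n m, dist (meetSeq w n m) (meetSeq w n (m+1)) ≤ (1/2 : ℝ)^n * (1/2)^m := by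
    intro n m
    calc dist (meetSeq w n m) (meetSeq w n (m+1)) ≤ dist (w (n + m)) (w (n + m + 1)) :=
          meetSeq_dist hLip w m n
      _ ≤ (1/2 : ℝ)^(n + m) := hwd _
      _ = (1/2 : ℝ)^n * (1/2)^m := pow_add _ _ _
  have hcau : ∀ n, CauchySeq (fun m => meetSeq w n m) :=
    fun n => cauchySeq_of_le_geometric (1/2) ((1/2)^n) (by norm_num) (hgeo n)
  have hanti : ∀ n, Antitone (fun m => meetSeq w n m) :=
    fun n => antitone_nat_of_succ_le (fun m => meetSeq_anti w m n)
  choose v hv using fun n => hdec _ (hanti n) (hcau n)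
  -- distance from w n to v n
  have hdist_wv : ∀ n, dist (w n) (v n) ≤ 2 * (1/2 : ℝ)^n := by
    intro n
    have := dist_le_of_le_geometric_of_tendsto₀ (1/2) ((1/2)^n) hr (hgeo n) (hv n)
    have h0 : meetSeq w n 0 = w n := rfl
    rw [h0] at this
    calc dist (w n) (v n) ≤ (1/2:ℝ)^n / (1 - 1/2) := this
      _ = 2 * (1/2 : ℝ)^n := by ring
  -- v is monotone
  have hvmono : Monotone v := by
    apply monotone_nat_of_le_succ
    intro n
    have hle : ∀ m, meetSeq w n (m + 1) ≤ meetSeq w (n + 1) m := fun m => inf_le_right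
    have key : ∀ m, dist (v n) (v n ⊓ v (n + 1)) ≤
        dist (v n) (meetSeq w n (m + 1)) +
          (dist (meetSeq w n (m + 1)) (v n) + dist (meetSeq w (n + 1) m) (v (n + 1))) := by
      intro m
      have heq : meetSeq w n (m + 1) = meetSeq w n (m + 1) ⊓ meetSeq w (n + 1) m :=
        (inf_eq_left.mpr (hle m)).symm
      calc dist (v n) (v n ⊓ v (n + 1))
          ≤ dist (v n) (meetSeq w n (m + 1)) + dist (meetSeq w n (m + 1)) (v n ⊓ v (n + 1)) :=
            dist_triangle _ _ _
        _ ≤ dist (v n) (meetSeq w n (m + 1)) +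
            (dist (meetSeq w n (m + 1)) (v n) + dist (meetSeq w (n + 1) m) (v (n + 1))) := by
            gcongr
            calc dist (meetSeq w n (m + 1)) (v n ⊓ v (n + 1))
                = dist (meetSeq w n (m + 1) ⊓ meetSeq w (n + 1) m) (v n ⊓ v (n + 1)) := by
                  rw [← heq]
              _ ≤ dist (meetSeq w n (m + 1)) (v n) + dist (meetSeq w (n + 1) m) (v (n + 1)) :=
                  inf_lip2 hLip _ _ _ _
    have t1 : Tendsto (fun m => meetSeq w n (m + 1)) atTop (nhds (v n)) :=
      (hv n).comp (tendsto_add_atTop_nat 1)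
    have ta : Tendsto (fun m => dist (v n) (meetSeq w n (m + 1))) atTop (nhds 0) := by
      simpa using (tendsto_const_nhds (x := v n)).dist t1
    have tb : Tendsto (fun m => dist (meetSeq w n (m + 1)) (v n)) atTop (nhds 0) := by
      simpa using t1.dist (tendsto_const_nhds (x := v n))
    have tc : Tendsto (fun m => dist (meetSeq w (n + 1) m) (v (n + 1))) atTop (nhds 0) := by
      simpa using (hv (n + 1)).dist (tendsto_const_nhds (x := v (n + 1)))
    have t2' : Tendsto (fun m => dist (v n) (meetSeq w n (m + 1)) +
        (dist (meetSeq w n (m + 1)) (v n) + dist (meetSeq w (n + 1) m) (v (n + 1))))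
        atTop (nhds 0) := by simpa using ta.add (tb.add tc)
    have hle0 : dist (v n) (v n ⊓ v (n + 1)) ≤ 0 :=
      le_of_tendsto_of_tendsto' tendsto_const_nhds t2' key
    have : v n ⊓ v (n + 1) = v n := by
      have := le_antisymm hle0 dist_nonneg
      exact (dist_eq_zero.mp this).symm
    exact inf_eq_left.mp this
  -- v is Cauchy
  have hwcau : CauchySeq w := hu.comp_tendsto hφmono.tendsto_atTop
  have hvcau : CauchySeq v := by
    rw [Metric.cauchySeq_iff] at hwcau ⊢
    intro ε hε
    obtain ⟨N1, hN1⟩ := hwcau (ε/3) (by linarith)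
    obtain ⟨N2, hN2⟩ := (tendsto_pow_atTop_nhds_zero_of_lt_one (by norm_num : (0:ℝ) ≤ 1/2)
      (by norm_num)).eventually (gt_mem_nhds (show (0:ℝ) < ε/12 by linarith)) |>.exists_forall_of_atTop
    refine ⟨max N1 N2, fun p hp q hq => ?_⟩
    have hp1 := le_of_max_le_left hp
    have hq1 := le_of_max_le_left hq
    have hp2 := hN2 p (le_of_max_le_right hp)
    have hq2 := hN2 q (le_of_max_le_right hq)
    calc dist (v p) (v q) ≤ dist (v p) (w p) + dist (w p) (w q) + dist (w q) (v q) :=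
          dist_triangle4 _ _ _ _
      _ < ε/3 + ε/3 + ε/3 := by
          have h1 : dist (v p) (w p) ≤ 2 * (1/2:ℝ)^p := dist_comm (w p) (v p) ▸ hdist_wv p
          have h2 : dist (w q) (v q) ≤ 2 * (1/2:ℝ)^q := hdist_wv q
          have h3 := hN1 p hp1 q hq1
          have := hp2.le; have := hq2.le
          linarith
      _ = ε := by ring
  obtain ⟨a, ha⟩ := hinc v hvmono hvcau
  -- w tends to a
  have hwa : Tendsto w atTop (nhds a) := by
    rw [tendsto_iff_dist_tendsto_zero]
    apply squeeze_zero (fun n => dist_nonneg)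
      (fun n => (dist_triangle (w n) (v n) a).trans (add_le_add_left (hdist_wv n) _))
    have l1 : Tendsto (fun n => 2 * (1/2:ℝ)^n) atTop (nhds 0) := by
      simpa using (tendsto_pow_atTop_nhds_zero_of_lt_one (by norm_num : (0:ℝ) ≤ 1/2)
        (by norm_num)).const_mul 2
    have l2 : Tendsto (fun n => dist (v n) a) atTop (nhds 0) := by
      simpa using ha.dist (tendsto_const_nhds (x := a))
    simpa using l1.add l2
  exact ⟨a, tendsto_nhds_of_cauchySeq_of_subseq hu hφmono.tendsto_atTop hwa⟩
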